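/- Let A → B be a ring extension and let C be an intermediate ring with C contained in the saturation of A in B. Then for any two prime ideals p₁, p₂ of B lying over the same prime ideal of A, we have p₁ ∩ C = p₂ ∩ C. -/

import Mathlib

open TensorProduct

/-- The saturation of `A` in `B`: elements `b` of `B` such that `b ⊗ 1 - 1 ⊗ b` is
nilpotent in `B ⊗[A] B`. -/
def saturation (A : Type*) {B : Type*} [CommRing A] [CommRing B] [Algebra A B] : Set B :=
  {b | IsNilpotent (b ⊗ₜ[A] (1 : B) - (1 : B) ⊗ₜ[A] b)}

/-- The induced map on residue fields `k(p ∩ A) → k(p)` associated to a ring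
homomorphism `f : A →+* B` and a prime `p` of `B`. -/
noncomputable def residueFieldMap {A B : Type*} [CommRing A] [CommRing B] (f : A →+* B)
    (p : Ideal B) [p.IsPrime] :
    IsLocalRing.ResidueField (Localization.AtPrime (p.comap f)) →+*
      IsLocalRing.ResidueField (Localization.AtPrime p) :=
  haveI := Localization.isLocalHom_localRingHom (p.comap f) p f rfl
  IsLocalRing.ResidueField.map (Localization.localRingHom (p.comap f) p f rfl)

/-- A ring homomorphism `f : A →+* B` is equiresidual if for every prime `p` of `B`
the induced residue field extension `k(p ∩ A) → k(p)` is an isomorphism. -/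
def Equiresidual {A B : Type*} [CommRing A] [CommRing B] (f : A →+* B) : Prop :=
  ∀ (p : Ideal B) (hp : p.IsPrime),
    Function.Bijective (@residueFieldMap _ _ _ _ f p hp)

/-- If two ring homs into a field agree on `A`, they agree on the saturation of `A`. -/
lemma saturation_apply_eq {A B F : Type*} [CommRing A] [CommRing B] [Field F]
    [Algebra A B] (g₁ g₂ : B →+* F)
    (hg : g₁.comp (algebraMap A B) = g₂.comp (algebraMap A B))
    {b : B} (hb : b ∈ saturation A) : g₁ b = g₂ b := by
  letI : Algebra A F := (g₁.comp (algebraMap A B)).toAlgebra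
  let G₁ : B →ₐ[A] F := { g₁ with commutes' := fun a => rfl }
  let G₂ : B →ₐ[A] F := { g₂ with
    commutes' := fun a => (RingHom.congr_fun hg a).symm }
  let ψ := Algebra.TensorProduct.productMap G₁ G₂
  have h2 : ψ (b ⊗ₜ[A] (1 : B) - (1 : B) ⊗ₜ[A] b) = g₁ b - g₂ b := by
    rw [map_sub, Algebra.TensorProduct.productMap_apply_tmul,
      Algebra.TensorProduct.productMap_apply_tmul]
    simp [G₁, G₂]
  have hnil : IsNilpotent (g₁ b - g₂ b) := h2 ▸ (hb.map ψ)
  exact sub_eq_zero.mp hnil.eq_zero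

set_option maxHeartbeats 1000000 in
/-- If `C` is an intermediate ring between `A` and `B` contained in the saturation of
`A` in `B`, then any two primes of `B` lying over the same prime of `A` contract to the
same prime of `C`. -/
theorem comap_eq_of_subset_saturation {A B : Type*} [CommRing A] [CommRing B] [Algebra A B]
    (C : Subalgebra A B) (hC : (C : Set B) ⊆ saturation A)
    (p₁ p₂ : Ideal B) (hp₁ : p₁.IsPrime) (hp₂ : p₂.IsPrime)
    (h : p₁.comap (algebraMap A B) = p₂.comap (algebraMap A B)) :
    p₁.comap C.val = p₂.comap C.val := by
  classical
  haveI := hp₁; haveI := hp₂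
  set q : Ideal A := p₁.comap (algebraMap A B) with hq
  have hq₁ : q ≤ p₁.comap (algebraMap A B) := le_rfl
  have hq₂ : q ≤ p₂.comap (algebraMap A B) := h.le
  -- quotients and fraction fields
  let A' := A ⧸ q
  let B₁ := B ⧸ p₁
  let B₂ := B ⧸ p₂
  let k := FractionRing A'
  let K₁ := FractionRing B₁
  let K₂ := FractionRing B₂
  -- maps A' → B₁, A' → B₂
  let f₁ : A' →+* B₁ := Ideal.quotientMap p₁ (algebraMap A B) hq₁
  let f₂ : A' →+* B₂ := Ideal.quotientMap p₂ (algebraMap A B) hq₂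
  have hf₁ : Function.Injective f₁ := Ideal.quotientMap_injective' (le_of_eq rfl)
  have hf₂ : Function.Injective f₂ := Ideal.quotientMap_injective' (le_of_eq h.symm)
  let ι₁ : A' →+* K₁ := (algebraMap B₁ K₁).comp f₁
  let ι₂ : A' →+* K₂ := (algebraMap B₂ K₂).comp f₂
  have hι₁ : Function.Injective ι₁ := (IsFractionRing.injective B₁ K₁).comp hf₁
  have hι₂ : Function.Injective ι₂ := (IsFractionRing.injective B₂ K₂).comp hf₂
  let σ₁ : k →+* K₁ := IsFractionRing.lift hι₁
  let σ₂ : k →+* K₂ := IsFractionRing.lift hι₂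
  letI : Algebra k K₁ := σ₁.toAlgebra
  letI : Algebra k K₂ := σ₂.toAlgebra
  -- the tensor product of the two residue fields is nontrivial
  let T := K₁ ⊗[k] K₂
  haveI : Module.Free k K₁ := Module.Free.of_divisionRing k K₁
  haveI : Module.FaithfullyFlat k K₁ :=
    Module.FaithfullyFlat.of_linearEquiv _ _ (Module.Free.chooseBasis k K₁).repr
  haveI : Nontrivial T := Module.FaithfullyFlat.lTensor_nontrivial k K₁ K₂
  obtain ⟨m, hm⟩ := Ideal.exists_maximal T
  haveI := hm
  letI F := T ⧸ m
  letI : Field F := Ideal.Quotient.field m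
  -- the two maps B → F
  let g₁ : B →+* F := ((Ideal.Quotient.mk m).comp
    ((Algebra.TensorProduct.includeLeftRingHom : K₁ →+* T).comp (algebraMap B₁ K₁))).comp
      (Ideal.Quotient.mk p₁)
  let g₂ : B →+* F := ((Ideal.Quotient.mk m).comp
    (((Algebra.TensorProduct.includeRight : K₂ →ₐ[k] T) : K₂ →+* T).comp (algebraMap B₂ K₂))).comp
      (Ideal.Quotient.mk p₂)
  -- kernels of the composites field → F are trivial
  have hinj₁ : Function.Injective ((Ideal.Quotient.mk m).comp
      (Algebra.TensorProduct.includeLeftRingHom : K₁ →+* T)) :=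
    RingHom.injective _
  have hinj₂ : Function.Injective ((Ideal.Quotient.mk m).comp
      ((Algebra.TensorProduct.includeRight : K₂ →ₐ[k] T) : K₂ →+* T)) :=
    RingHom.injective _
  have hker₁ : ∀ b : B, g₁ b = 0 ↔ b ∈ p₁ := by
    intro b
    constructor
    · intro hb
      have : (algebraMap B₁ K₁) (Ideal.Quotient.mk p₁ b) = 0 := by
        apply hinj₁
        rw [map_zero]
        exact hb
      have : (Ideal.Quotient.mk p₁ b : B₁) = 0 :=
        (IsFractionRing.injective B₁ K₁) (this.trans (map_zero _).symm)
      exact (Ideal.Quotient.eq_zero_iff_mem).mp this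
    · intro hb
      simp [g₁, Ideal.Quotient.eq_zero_iff_mem.mpr hb]
  have hker₂ : ∀ b : B, g₂ b = 0 ↔ b ∈ p₂ := by
    intro b
    constructor
    · intro hb
      have : (algebraMap B₂ K₂) (Ideal.Quotient.mk p₂ b) = 0 := by
        apply hinj₂
        rw [map_zero]
        exact hb
      have : (Ideal.Quotient.mk p₂ b : B₂) = 0 :=
        (IsFractionRing.injective B₂ K₂) (this.trans (map_zero _).symm)
      exact (Ideal.Quotient.eq_zero_iff_mem).mp this
    · intro hb
      simp [g₂, Ideal.Quotient.eq_zero_iff_mem.mpr hb]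
  -- g₁ and g₂ agree on A
  have hag : g₁.comp (algebraMap A B) = g₂.comp (algebraMap A B) := by
    ext a
    have e₁ : (Ideal.Quotient.mk p₁) (algebraMap A B a) = f₁ (Ideal.Quotient.mk q a) :=
      (Ideal.quotientMap_mk).symm
    have e₂ : (Ideal.Quotient.mk p₂) (algebraMap A B a) = f₂ (Ideal.Quotient.mk q a) :=
      (Ideal.quotientMap_mk).symm
    have l₁ : (algebraMap B₁ K₁) (f₁ (Ideal.Quotient.mk q a)) =
        σ₁ (algebraMap A' k (Ideal.Quotient.mk q a)) :=
      (IsFractionRing.lift_algebraMap hι₁ _).symm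
    have l₂ : (algebraMap B₂ K₂) (f₂ (Ideal.Quotient.mk q a)) =
        σ₂ (algebraMap A' k (Ideal.Quotient.mk q a)) :=
      (IsFractionRing.lift_algebraMap hι₂ _).symm
    have key : ∀ x : k,
        (Algebra.TensorProduct.includeLeftRingHom : K₁ →+* T) (σ₁ x) =
        ((Algebra.TensorProduct.includeRight : K₂ →ₐ[k] T) : K₂ →+* T) (σ₂ x) := by
      intro x
      have : σ₁ x = algebraMap k K₁ x := rfl
      have h2 : σ₂ x = algebraMap k K₂ x := rfl
      rw [this, h2]
      exact RingHom.congr_fun (Algebra.TensorProduct.includeLeftRingHom_comp_algebraMap) x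
    simp only [g₁, g₂, RingHom.comp_apply, e₁, e₂, l₁, l₂, key]
  -- conclude
  ext x
  simp only [Ideal.mem_comap, Subalgebra.coe_val]
  have hx : (x : B) ∈ saturation A := hC x.2
  have := saturation_apply_eq g₁ g₂ hag hx
  rw [← hker₁, ← hker₂, this]
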